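/- Let K be a field and q ∈ K an element that is not a root of unity. Then the quantized Weyl algebra C(q) does not satisfy property (⋄): there exists a finitely generated monolithic left C(q)-module that is not Artinian. -/

import Mathlib

noncomputable section

open FreeAlgebra

/-- Defining relation of the quantized Weyl algebra `C(q)`: `a * b = q • (b * a) + 1`,
where `ι K 0` plays the role of `a` and `ι K 1` plays the role of `b`. -/
inductive QuantizedWeylRel (K : Type) [Field K] (q : K) :
    FreeAlgebra K (Fin 2) → FreeAlgebra K (Fin 2) → Prop
  | rel : QuantizedWeylRel K q (ι K (0 : Fin 2) * ι K (1 : Fin 2))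
      (q • (ι K (1 : Fin 2) * ι K (0 : Fin 2)) + 1)

/-- The quantized Weyl algebra `C(q)`. -/
abbrev QuantizedWeyl (K : Type) [Field K] (q : K) : Type :=
  RingQuot (QuantizedWeylRel K q)

/-- The generator `a` of the quantized Weyl algebra. -/
def QuantizedWeyl.a (K : Type) [Field K] (q : K) : QuantizedWeyl K q :=
  RingQuot.mkAlgHom K (QuantizedWeylRel K q) (ι K (0 : Fin 2))

/-- The generator `b` of the quantized Weyl algebra. -/
def QuantizedWeyl.b (K : Type) [Field K] (q : K) : QuantizedWeyl K q :=
  RingQuot.mkAlgHom K (QuantizedWeylRel K q) (ι K (1 : Fin 2))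

/-- A witness to the failure of property `(⋄)` for the ring `B`: a finitely generated
left `B`-module that is monolithic — it has a simple submodule which is essential,
i.e., meets every nonzero submodule nontrivially — but is not Artinian. -/
structure FGMonolithicNonArtinianModule (B : Type) [Ring B] where
  /-- The underlying module. -/
  M : Type
  /-- `M` is an abelian group. -/
  [isAddCommGroup : AddCommGroup M]
  /-- `M` is a left `B`-module. -/
  [isModule : Module B M]
  /-- `M` is finitely generated. -/
  fg : Module.Finite B M
  /-- The monolith: a submodule of `M`. -/
  monolith : Submodule B M
  /-- The monolith is a simple module. -/
  monolith_simple : IsSimpleModule B monolith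
  /-- The monolith is essential in `M`. -/
  monolith_essential : ∀ N : Submodule B M, N ≠ ⊥ → N ⊓ monolith ≠ ⊥
  /-- `M` is not Artinian. -/
  not_artinian : ¬ IsArtinian B M

attribute [instance] FGMonolithicNonArtinianModule.isAddCommGroup
  FGMonolithicNonArtinianModule.isModule

namespace QWpf

variable (K : Type) [Field K] (q : K)

/-- coefficient `γ i = (q^i - 1)/(q - 1)`. -/
def ga : ℕ → K := fun i => (q ^ i - 1) / (q - 1)

def mu : K := (1 - q)⁻¹

def tt : ℕ → K
  | 0 => 1
  | (j+1) => -mu K q * q ^ j * tt j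

/-- shift-up operator on `ℕ →₀ K`. -/
def U : (ℕ →₀ K) →ₗ[K] (ℕ →₀ K) := Finsupp.lmapDomain K K Nat.succ

/-- diagonal operator. -/
def dg (lam : ℕ → K) : (ℕ →₀ K) →ₗ[K] (ℕ →₀ K) :=
  Finsupp.lsum K fun i => lam i • Finsupp.lsingle i

/-- q-derivative-like lowering operator. -/
def Dq : (ℕ →₀ K) →ₗ[K] (ℕ →₀ K) :=
  (Finsupp.lcomapDomain Nat.succ Nat.succ_injective) ∘ₗ dg K (ga K q)

/-- the cocycle functional. -/
def tau : (ℕ →₀ K) →ₗ[K] K := Finsupp.lsum K fun j => tt K q j • LinearMap.id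

abbrev Mo : Type := (ℕ →₀ K) × (ℕ →₀ K)

def Amap : Mo K →ₗ[K] Mo K :=
  LinearMap.prod (Dq K q ∘ₗ LinearMap.fst K _ _)
    ((dg K (fun j => mu K q * q ^ j) ∘ₗ LinearMap.snd K _ _) + (U K ∘ₗ LinearMap.snd K _ _))

def Bmap : Mo K →ₗ[K] Mo K :=
  LinearMap.prod ((U K ∘ₗ LinearMap.fst K _ _) +
      (Finsupp.lsingle 0 ∘ₗ (tau K q ∘ₗ LinearMap.snd K _ _)))
    (dg K (fun j => q⁻¹ ^ j) ∘ₗ LinearMap.snd K _ _)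

lemma Amap_apply (v : Mo K) :
    Amap K q v = (Dq K q v.1, dg K (fun j => mu K q * q ^ j) v.2 + U K v.2) := rfl

lemma Bmap_apply (v : Mo K) :
    Bmap K q v = (U K v.1 + Finsupp.single 0 (tau K q v.2), dg K (fun j => q⁻¹ ^ j) v.2) := rfl

lemma U_single (i : ℕ) (x : K) : U K (Finsupp.single i x) = Finsupp.single (i+1) x := by
  simp [U, Finsupp.lmapDomain_apply, Finsupp.mapDomain_single]

lemma U_apply_zero (s : ℕ →₀ K) : U K s 0 = 0 := by
  simpa [U, Finsupp.lmapDomain_apply] using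
    Finsupp.mapDomain_notin_range (f := Nat.succ) s 0 (by simp)

lemma U_apply_succ (s : ℕ →₀ K) (m : ℕ) : U K s (m+1) = s m := by
  simpa [U, Finsupp.lmapDomain_apply] using
    Finsupp.mapDomain_apply Nat.succ_injective s m

lemma dg_single (lam : ℕ → K) (i : ℕ) (x : K) :
    dg K lam (Finsupp.single i x) = Finsupp.single i (lam i * x) := by
  simp [dg, Finsupp.smul_single]

lemma dg_apply (lam : ℕ → K) (s : ℕ →₀ K) (n : ℕ) : dg K lam s n = lam n * s n := by
  induction s using Finsupp.induction_linear with
  | zero => simp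
  | add f g hf hg => simp [map_add, hf, hg, mul_add]
  | single i x =>
      rw [dg_single]
      rcases eq_or_ne i n with rfl | h
      · simp
      · simp [Finsupp.single_apply_eq_zero.2 (fun hin => absurd hin h), h]

lemma tau_single (j : ℕ) (x : K) : tau K q (Finsupp.single j x) = tt K q j * x := by
  simp [tau]

lemma Dq_apply (s : ℕ →₀ K) (n : ℕ) : Dq K q s n = ga K q (n+1) * s (n+1) := by
  simp [Dq, Finsupp.lcomapDomain, Finsupp.comapDomain_apply, dg_apply]


variable {K q}

lemma ga_zero : ga K q 0 = 0 := by simp [ga]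

lemma ga_succ (hq1 : q ≠ 1) (n : ℕ) : ga K q (n+1) = q * ga K q n + 1 := by
  have h : q - 1 ≠ 0 := sub_ne_zero.2 hq1
  unfold ga
  rw [mul_div_assoc', div_add_one h]
  congr 1
  ring

lemma ga_one (hq1 : q ≠ 1) : ga K q 1 = 1 := by
  rw [ga_succ hq1, ga_zero]; ring

lemma mu_spec (hq1 : q ≠ 1) : mu K q * (1 - q) = 1 := by
  have : (1 : K) - q ≠ 0 := sub_ne_zero.2 (Ne.symm hq1)
  unfold mu
  field_simp

lemma mu_ne_zero (hq1 : q ≠ 1) : mu K q ≠ 0 := by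
  intro h
  have := mu_spec (q := q) hq1
  rw [h, zero_mul] at this
  exact one_ne_zero this.symm

lemma pow_inj (hq0 : q ≠ 0) (hq : ∀ k : ℕ, 0 < k → q ^ k ≠ 1) {i j : ℕ}
    (h : q ^ i = q ^ j) : i = j := by
  rcases lt_trichotomy i j with hij | hij | hij
  · exfalso
    have : q ^ i * q ^ (j - i) = q ^ i * 1 := by
      rw [mul_one, ← pow_add]
      rw [h]; congr 1; omega
    have h2 := mul_left_cancel₀ (pow_ne_zero i hq0) this
    exact hq (j - i) (by omega) h2
  · exact hij
  · exfalso
    have : q ^ j * q ^ (i - j) = q ^ j * 1 := by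
      rw [mul_one, ← pow_add]
      rw [← h]; congr 1; omega
    have h2 := mul_left_cancel₀ (pow_ne_zero j hq0) this
    exact hq (i - j) (by omega) h2

lemma ga_ne_zero (hq1 : q ≠ 1) (hq : ∀ k : ℕ, 0 < k → q ^ k ≠ 1) (n : ℕ) :
    ga K q (n+1) ≠ 0 := by
  have h : q - 1 ≠ 0 := sub_ne_zero.2 hq1
  simp only [ga, div_ne_zero_iff]
  exact ⟨sub_ne_zero.2 (hq (n+1) (Nat.succ_pos n)), h⟩

lemma tt_ne_zero (hq0 : q ≠ 0) (hq1 : q ≠ 1) (j : ℕ) : tt K q j ≠ 0 := by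
  induction j with
  | zero => simp [tt]
  | succ j ih =>
      simp only [tt]
      exact mul_ne_zero (mul_ne_zero (neg_ne_zero.2 (mu_ne_zero hq1)) (pow_ne_zero j hq0)) ih

/-- The cocycle is chosen so that `τ ∘ (dgA + U) = 0`. -/
lemma tau_vanish (c : ℕ →₀ K) :
    tau K q (dg K (fun j => mu K q * q ^ j) c + U K c) = 0 := by
  induction c using Finsupp.induction_linear with
  | zero => simp
  | add f g hf hg =>
      rw [map_add (dg K _), map_add (U K)]
      rw [show dg K (fun j => mu K q * q ^ j) f + dg K (fun j => mu K q * q ^ j) g +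
        (U K f + U K g) = (dg K (fun j => mu K q * q ^ j) f + U K f) +
        (dg K (fun j => mu K q * q ^ j) g + U K g) by abel]
      rw [map_add, hf, hg, add_zero]
  | single j x =>
      rw [dg_single, U_single, map_add, tau_single, tau_single]
      show tt K q j * (mu K q * q ^ j * x) + tt K q (j+1) * x = 0
      simp only [tt]
      ring

/-- The fundamental relation `A ∘ B = q • (B ∘ A) + 1`. -/
lemma relation (hq0 : q ≠ 0) (hq1 : q ≠ 1) :
    (Amap K q) ∘ₗ (Bmap K q) = q • ((Bmap K q) ∘ₗ (Amap K q)) + LinearMap.id := by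
  apply LinearMap.ext
  rintro ⟨s, c⟩
  have hqu : q * q⁻¹ = 1 := mul_inv_cancel₀ hq0
  have hmu2 : mu K q = q * mu K q + 1 := by
    have h := mu_spec (q := q) hq1
    linear_combination h
  simp only [LinearMap.comp_apply, LinearMap.add_apply, LinearMap.smul_apply,
    LinearMap.id_apply, Amap_apply, Bmap_apply, Prod.smul_mk, Prod.mk_add_mk,
    Prod.mk.injEq]
  constructor
  · -- first component
    rw [tau_vanish, Finsupp.single_zero, add_zero]
    ext n
    simp only [Finsupp.add_apply, Finsupp.smul_apply, smul_eq_mul, Dq_apply]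
    rw [Finsupp.single_eq_of_ne' (by omega : (0:ℕ) ≠ n+1)]
    match n with
    | 0 =>
        rw [U_apply_succ, U_apply_zero, ga_one hq1]
        ring
    | (m+1) =>
        rw [U_apply_succ, U_apply_succ, Dq_apply, ga_succ hq1 (m+1)]
        ring
  · -- second component
    ext n
    simp only [Finsupp.add_apply, Finsupp.smul_apply, smul_eq_mul, dg_apply]
    match n with
    | 0 =>
        rw [U_apply_zero, U_apply_zero]
        simp only [pow_zero]
        linear_combination (c 0) * hmu2
    | (m+1) =>
        rw [U_apply_succ, U_apply_succ]
        simp only [dg_apply, Finsupp.add_apply]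
        have hpow : q ^ (m+1) * q⁻¹ ^ (m+1) = 1 := by
          rw [← mul_pow, hqu, one_pow]
        have hpow2 : q * q⁻¹ ^ (m+1) = q⁻¹ ^ m := by
          rw [pow_succ]
          field_simp
        linear_combination (q^(m+1) * q⁻¹^(m+1) * c (m+1)) * hmu2 + (c (m+1)) * hpow - (c m) * hpow2


variable (K q)

def wv (i : ℕ) : Mo K := (Finsupp.single i 1, 0)

def fv (j : ℕ) : Mo K := (0, Finsupp.single j 1)

variable {K q}

lemma Bmap_wv (i : ℕ) : Bmap K q (wv K i) = wv K (i+1) := by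
  simp [Bmap_apply, wv, U_single, map_zero]

lemma Amap_wv_zero : Amap K q (wv K 0) = 0 := by
  have h1 : Dq K q (Finsupp.single 0 (1:K)) = 0 := by
    ext n
    rw [Dq_apply]
    simp
  simp [Amap_apply, wv, h1, map_zero]

lemma Bmap_fv0 : Bmap K q (fv K 0) = wv K 0 + fv K 0 := by
  have h0 : tau K q (Finsupp.single 0 (1:K)) = 1 := by
    rw [tau_single]; simp [tt]
  have h1 : dg K (fun j => q⁻¹ ^ j) (Finsupp.single 0 (1:K)) = Finsupp.single 0 1 := by
    rw [dg_single]; norm_num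
  rw [show (fv K 0 : Mo K) = ((0 : ℕ →₀ K), Finsupp.single 0 1) from rfl, Bmap_apply]
  simp only [map_zero, h0, h1, zero_add]
  rw [show wv K 0 + ((0 : ℕ →₀ K), Finsupp.single 0 1) =
    ((Finsupp.single 0 1 : ℕ →₀ K), Finsupp.single 0 (1:K)) by
      rw [wv, Prod.mk_add_mk, add_zero, zero_add]]

lemma Amap_fv (j : ℕ) :
    Amap K q (fv K j) = (mu K q * q ^ j) • fv K j + fv K (j+1) := by
  have h1 : dg K (fun j' => mu K q * q ^ j') (Finsupp.single j (1:K)) =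
      Finsupp.single j (mu K q * q ^ j) := by rw [dg_single]; simp
  simp [Amap_apply, fv, h1, U_single, map_zero, Prod.ext_iff, Finsupp.smul_single]

lemma Amap_sect (s : ℕ →₀ K) : Amap K q ((s, 0) : Mo K) = (Dq K q s, 0) := by
  simp [Amap_apply, map_zero]

/-- From `w 0`, `B`-closure spans the whole first factor. -/
lemma span_w (N₀ : Submodule K (Mo K)) (hB : ∀ v ∈ N₀, Bmap K q v ∈ N₀)
    (hw0 : wv K 0 ∈ N₀) : ∀ s : ℕ →₀ K, ((s, 0) : Mo K) ∈ N₀ := by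
  have hw : ∀ i, wv K i ∈ N₀ := by
    intro i
    induction i with
    | zero => exact hw0
    | succ i ih => rw [← Bmap_wv]; exact hB _ ih
  intro s
  induction s using Finsupp.induction_linear with
  | zero => exact N₀.zero_mem
  | add f g hf hg =>
      have : ((f + g, 0) : Mo K) = (f, (0:ℕ →₀ K)) + (g, 0) := by
        rw [Prod.mk_add_mk, add_zero]
      rw [this]; exact N₀.add_mem hf hg
  | single i x =>
      have : ((Finsupp.single i x, 0) : Mo K) = x • wv K i := by
        simp [wv, Prod.smul_mk, Finsupp.smul_single]
      rw [this]; exact N₀.smul_mem x (hw i)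

/-- Core of finite generation: `f 0` generates everything. -/
lemma gen_all (N₀ : Submodule K (Mo K)) (hA : ∀ v ∈ N₀, Amap K q v ∈ N₀)
    (hB : ∀ v ∈ N₀, Bmap K q v ∈ N₀) (hf0 : fv K 0 ∈ N₀) : ∀ v : Mo K, v ∈ N₀ := by
  have hw0 : wv K 0 ∈ N₀ := by
    have h : wv K 0 = Bmap K q (fv K 0) - fv K 0 := by rw [Bmap_fv0]; abel
    rw [h]; exact N₀.sub_mem (hB _ hf0) hf0
  have hsect := span_w N₀ hB hw0
  have hf : ∀ j, fv K j ∈ N₀ := by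
    intro j
    induction j with
    | zero => exact hf0
    | succ j ih =>
        have h : fv K (j+1) = Amap K q (fv K j) - (mu K q * q ^ j) • fv K j := by
          rw [Amap_fv]; abel
        rw [h]; exact N₀.sub_mem (hA _ ih) (N₀.smul_mem _ ih)
  have hc : ∀ c : ℕ →₀ K, (((0:ℕ →₀ K), c) : Mo K) ∈ N₀ := by
    intro c
    induction c using Finsupp.induction_linear with
    | zero => exact N₀.zero_mem
    | add f g hfm hgm =>
        have : (((0:ℕ →₀ K), f + g) : Mo K) = ((0:ℕ →₀ K), f) + ((0:ℕ →₀ K), g) := by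
          rw [Prod.mk_add_mk, add_zero]
        rw [this]; exact N₀.add_mem hfm hgm
    | single j x =>
        have : (((0:ℕ →₀ K), Finsupp.single j x) : Mo K) = x • fv K j := by
          simp [fv, Prod.smul_mk, Finsupp.smul_single]
        rw [this]; exact N₀.smul_mem x (hf j)
  intro v
  have : v = ((v.1, 0) : Mo K) + ((0:ℕ →₀ K), v.2) := by
    rw [Prod.mk_add_mk, add_zero, zero_add]
  rw [this]
  exact N₀.add_mem (hsect v.1) (hc v.2)

/-- Core of simplicity: any nonzero element of the first factor generates `w 0`. -/
lemma reach_w0 (hq1 : q ≠ 1) (hq : ∀ k : ℕ, 0 < k → q ^ k ≠ 1)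
    (N₀ : Submodule K (Mo K)) (hA : ∀ v ∈ N₀, Amap K q v ∈ N₀) :
    ∀ (s : ℕ →₀ K), s ≠ 0 → ((s, 0) : Mo K) ∈ N₀ → wv K 0 ∈ N₀ := by
  have base : ∀ (s : ℕ →₀ K), s ≠ 0 → (∀ m, s (m+1) = 0) → ((s, 0) : Mo K) ∈ N₀ →
      wv K 0 ∈ N₀ := by
    intro s hs hsm hmem
    have hs0 : s 0 ≠ 0 := by
      intro h0
      apply hs
      ext m
      cases m with
      | zero => exact h0
      | succ m => exact hsm m
    have hseq : s = Finsupp.single 0 (s 0) := by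
      ext m
      cases m with
      | zero => simp
      | succ m => rw [hsm m]; simp
    have : wv K 0 = (s 0)⁻¹ • ((s, 0) : Mo K) := by
      rw [hseq]
      simp [wv, Prod.smul_mk, Finsupp.smul_single, inv_mul_cancel₀ hs0]
    rw [this]
    exact N₀.smul_mem _ hmem
  suffices h : ∀ (n : ℕ) (s : ℕ →₀ K), s ≠ 0 → (∀ i ∈ s.support, i ≤ n) →
      ((s, 0) : Mo K) ∈ N₀ → wv K 0 ∈ N₀ by
    intro s hs hmem
    exact h (s.support.sup id) s hs (fun i hi => Finset.le_sup (f := id) hi) hmem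
  intro n
  induction n with
  | zero =>
      intro s hs hsupp hmem
      refine base s hs (fun m => ?_) hmem
      by_contra hne
      have hmem' : m + 1 ∈ s.support := Finsupp.mem_support_iff.2 hne
      have := hsupp _ hmem'
      omega
  | succ n ih =>
      intro s hs hsupp hmem
      by_cases hDq : Dq K q s = 0
      · refine base s hs (fun m => ?_) hmem
        have : Dq K q s m = 0 := by rw [hDq]; rfl
        rw [Dq_apply] at this
        rcases mul_eq_zero.1 this with h | h
        · exact absurd h (ga_ne_zero hq1 hq m)
        · exact h
      · refine ih (Dq K q s) hDq (fun i hi => ?_) ?_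
        · have hne : Dq K q s i ≠ 0 := Finsupp.mem_support_iff.1 hi
          rw [Dq_apply] at hne
          have : s (i+1) ≠ 0 := fun h => hne (by rw [h, mul_zero])
          have := hsupp (i+1) (Finsupp.mem_support_iff.2 this)
          omega
        · rw [← Amap_sect]; exact hA _ hmem


/-- Core of essentiality: B-closure of any nonzero element hits the first factor. -/
lemma hit_socle (hq0 : q ≠ 0) (hq1 : q ≠ 1) (hq : ∀ k : ℕ, 0 < k → q ^ k ≠ 1)
    (N₀ : Submodule K (Mo K)) (hB : ∀ v ∈ N₀, Bmap K q v ∈ N₀) :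
    ∀ (n : ℕ) (v : Mo K), v ∈ N₀ → v ≠ 0 → v.2.support.card ≤ n →
      ∃ u ∈ N₀, u ≠ 0 ∧ u.2 = 0 := by
  intro n
  induction n with
  | zero =>
      intro v hv hvne hcard
      refine ⟨v, hv, hvne, ?_⟩
      have : v.2.support = ∅ := Finset.card_eq_zero.1 (Nat.le_zero.1 hcard)
      exact Finsupp.support_eq_empty.1 this
  | succ n ih =>
      intro v hv hvne hcard
      by_cases h2 : v.2 = 0
      · exact ⟨v, hv, hvne, h2⟩
      · obtain ⟨j₀, hj₀⟩ := Finsupp.support_nonempty_iff.2 h2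
        set c := v.2 with hc
        set s := v.1 with hs
        have hcj₀ : c j₀ ≠ 0 := Finsupp.mem_support_iff.1 hj₀
        set v' := Bmap K q v - (q⁻¹ ^ j₀) • v with hv'def
        have hv'mem : v' ∈ N₀ := N₀.sub_mem (hB v hv) (N₀.smul_mem _ hv)
        have hv'2 : ∀ j, v'.2 j = q⁻¹ ^ j * c j - q⁻¹ ^ j₀ * c j := by
          intro j
          have h1 : v'.2 = dg K (fun j' => q⁻¹ ^ j') c - q⁻¹ ^ j₀ • c := rfl
          rw [h1, Finsupp.sub_apply, Finsupp.smul_apply, smul_eq_mul, dg_apply]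
        have hne_pow : ∀ j, j ≠ j₀ → q⁻¹ ^ j - q⁻¹ ^ j₀ ≠ 0 := by
          intro j hjne h
          apply hjne
          apply pow_inj hq0 hq
          have h' : q⁻¹ ^ j = q⁻¹ ^ j₀ := by linear_combination h
          have := congrArg (fun x : K => x⁻¹) h'
          simpa [inv_pow] using this
        have hsub : v'.2.support ⊆ c.support.erase j₀ := by
          intro j hj
          have hjne : v'.2 j ≠ 0 := Finsupp.mem_support_iff.1 hj
          rw [hv'2] at hjne
          rcases eq_or_ne j j₀ with rfl | hjj
          · exact absurd (by ring) hjne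
          · refine Finset.mem_erase.2 ⟨hjj, Finsupp.mem_support_iff.2 fun h => hjne (by rw [h]; ring)⟩
        by_cases hv'0 : v' = 0
        · exfalso
          -- then v is a b-eigenvector; contradiction with finite support
          have hcc : ∀ j, j ≠ j₀ → c j = 0 := by
            intro j hjj
            have : v'.2 j = 0 := by rw [hv'0]; rfl
            rw [hv'2] at this
            have h' : (q⁻¹ ^ j - q⁻¹ ^ j₀) * c j = 0 := by linear_combination this
            rcases mul_eq_zero.1 h' with h | h
            · exact absurd h (hne_pow j hjj)
            · exact h
          have hceq : c = Finsupp.single j₀ (c j₀) := by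
            ext j
            rcases eq_or_ne j j₀ with rfl | hjj
            · simp
            · rw [hcc j hjj]
              exact (Finsupp.single_eq_of_ne' (fun h => hjj h.symm)).symm
          have htau : tau K q c = tt K q j₀ * c j₀ := by
            conv_lhs => rw [hceq, tau_single]
          have htau_ne : tau K q c ≠ 0 := by
            rw [htau]
            exact mul_ne_zero (tt_ne_zero hq0 hq1 j₀) hcj₀
          have hv'1 : ∀ m, v'.1 m = 0 := by
            intro m
            rw [hv'0]; rfl
          have heq1 : ∀ m, v'.1 m = U K s m + Finsupp.single 0 (tau K q c) m
              - q⁻¹ ^ j₀ * s m := by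
            intro m
            have h1 : v'.1 = (U K s + Finsupp.single 0 (tau K q c)) - q⁻¹ ^ j₀ • s := rfl
            rw [h1, Finsupp.sub_apply, Finsupp.add_apply, Finsupp.smul_apply, smul_eq_mul]
          have hs0 : s 0 ≠ 0 := by
            intro h0
            apply htau_ne
            have := (heq1 0).symm.trans (hv'1 0)
            rw [U_apply_zero, Finsupp.single_eq_same, h0, mul_zero, zero_add, sub_zero] at this
            exact this
          have hrec : ∀ m, s (m+1) = q ^ j₀ * s m := by
            intro m
            have := (heq1 (m+1)).symm.trans (hv'1 (m+1))
            rw [U_apply_succ, Finsupp.single_eq_of_ne' (by omega : (0:ℕ) ≠ m+1)] at this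
            have hppow : q ^ j₀ * q⁻¹ ^ j₀ = 1 := by
              rw [← mul_pow, mul_inv_cancel₀ hq0, one_pow]
            linear_combination -(q ^ j₀) * this - s (m+1) * hppow
          have hsm : ∀ m, s m ≠ 0 := by
            intro m
            induction m with
            | zero => exact hs0
            | succ m ihm =>
                rw [hrec m]
                exact mul_ne_zero (pow_ne_zero j₀ hq0) ihm
          have hmm : s.support.sup id + 1 ∈ s.support :=
            Finsupp.mem_support_iff.2 (hsm _)
          have := Finset.le_sup (f := id) hmm
          simp only [id_eq] at this
          omega
        · refine ih v' hv'mem hv'0 ?_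
          calc v'.2.support.card ≤ (c.support.erase j₀).card := Finset.card_le_card hsub
            _ = c.support.card - 1 := Finset.card_erase_of_mem hj₀
            _ ≤ n := by omega

variable (K)

/-- The descending chain of K-submodules. -/
def chainN (k : ℕ) : Submodule K (Mo K) where
  carrier := {v | ∀ j < k, v.2 j = 0}
  zero_mem' := by intro j _; rfl
  add_mem' := by
    intro a b ha hb j hj
    show a.2 j + b.2 j = 0
    rw [ha j hj, hb j hj, add_zero]
  smul_mem' := by
    intro x a ha j hj
    show (x • a.2) j = 0
    rw [Finsupp.smul_apply, ha j hj, smul_zero]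

variable {K}

lemma chainN_mem {k : ℕ} {v : Mo K} : v ∈ chainN K k ↔ ∀ j < k, v.2 j = 0 := Iff.rfl

lemma chainN_A {k : ℕ} : ∀ v ∈ chainN K k, Amap K q v ∈ chainN K k := by
  intro v hv j hj
  rw [Amap_apply]
  show (dg K (fun j' => mu K q * q ^ j') v.2 + U K v.2) j = 0
  rw [Finsupp.add_apply, dg_apply, hv j hj, mul_zero, zero_add]
  match j with
  | 0 => exact U_apply_zero _ _
  | (m+1) => rw [U_apply_succ]; exact hv m (by omega)

lemma chainN_B {k : ℕ} : ∀ v ∈ chainN K k, Bmap K q v ∈ chainN K k := by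
  intro v hv j hj
  rw [Bmap_apply]
  show dg K (fun j' => q⁻¹ ^ j') v.2 j = 0
  rw [dg_apply, hv j hj, mul_zero]

lemma chainN_antitone {k : ℕ} : chainN K (k+1) ≤ chainN K k := by
  intro v hv j hj
  exact hv j (by omega)

lemma fv_mem_chainN (k : ℕ) : fv K k ∈ chainN K k := by
  intro j hj
  show Finsupp.single k (1:K) j = 0
  exact Finsupp.single_eq_of_ne (by omega)

lemma fv_not_mem_chainN (k : ℕ) : fv K k ∉ chainN K (k+1) := by
  intro h
  have := h k (by omega)
  rw [show (fv K k).2 = Finsupp.single k (1:K) from rfl, Finsupp.single_eq_same] at this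
  exact one_ne_zero this


variable (K q)

def rho : FreeAlgebra K (Fin 2) →ₐ[K] Module.End K (Mo K) :=
  FreeAlgebra.lift K (fun i => if i = 0 then Amap K q else Bmap K q)

lemma rho_i0 : rho K q (FreeAlgebra.ι K (0 : Fin 2)) = Amap K q := by
  rw [rho, FreeAlgebra.lift_ι_apply]
  exact if_pos rfl

lemma rho_i1 : rho K q (FreeAlgebra.ι K (1 : Fin 2)) = Bmap K q := by
  rw [rho, FreeAlgebra.lift_ι_apply]
  exact if_neg (by decide)

variable {K q}

lemma rho_rel (hq0 : q ≠ 0) (hq1 : q ≠ 1) :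
    ∀ ⦃x y⦄, QuantizedWeylRel K q x y → rho K q x = rho K q y := by
  intro x y h
  cases h
  rw [map_mul, map_add, map_smul, map_mul, map_one, rho_i0, rho_i1]
  have hrel := relation (K := K) (q := q) hq0 hq1
  show Amap K q * Bmap K q = q • (Bmap K q * Amap K q) + 1
  rw [Module.End.mul_eq_comp, Module.End.mul_eq_comp, hrel]
  rfl

def Phi (hq0 : q ≠ 0) (hq1 : q ≠ 1) :
    QuantizedWeyl K q →ₐ[K] Module.End K (Mo K) :=
  RingQuot.liftAlgHom K ⟨rho K q, rho_rel hq0 hq1⟩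

def qwMod (hq0 : q ≠ 0) (hq1 : q ≠ 1) : Module (QuantizedWeyl K q) (Mo K) :=
  Module.compHom (Mo K) (Phi hq0 hq1).toRingHom

end QWpf

open QWpf in
/-- If `q` is not a root of unity, the quantized Weyl algebra `C(q)` does not satisfy
property `(⋄)`: there is a finitely generated monolithic left `C(q)`-module that is
not Artinian. -/
theorem quantizedWeyl_not_diamond (K : Type) [Field K] (q : K) (hq0 : q ≠ 0)
    (hq : ∀ k : ℕ, 0 < k → q ^ k ≠ 1) :
    Nonempty (FGMonolithicNonArtinianModule (QuantizedWeyl K q)) := by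
  classical
  have hq1 : q ≠ 1 := fun h => hq 1 one_pos (by rw [pow_one, h])
  letI instM : Module (QuantizedWeyl K q) (Mo K) := qwMod hq0 hq1
  have hsmul : ∀ (x : QuantizedWeyl K q) (v : Mo K),
      x • v = Phi hq0 hq1 x v := fun _ _ => rfl
  have ha : ∀ v : Mo K, QuantizedWeyl.a K q • v = Amap K q v := by
    intro v
    rw [hsmul, QuantizedWeyl.a, Phi, RingQuot.liftAlgHom_mkAlgHom_apply, rho_i0]
  have hb : ∀ v : Mo K, QuantizedWeyl.b K q • v = Bmap K q v := by
    intro v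
    rw [hsmul, QuantizedWeyl.b, Phi, RingQuot.liftAlgHom_mkAlgHom_apply, rho_i1]
  have halg : ∀ (x : K) (v : Mo K),
      (algebraMap K (QuantizedWeyl K q) x) • v = x • v := by
    intro x v
    rw [hsmul, AlgHom.commutes]
    rfl
  have key : ∀ (y : FreeAlgebra K (Fin 2)) (N₀ : Submodule K (Mo K)),
      (∀ v ∈ N₀, Amap K q v ∈ N₀) → (∀ v ∈ N₀, Bmap K q v ∈ N₀) →
      ∀ v ∈ N₀, rho K q y v ∈ N₀ := by
    intro y N₀ hA hB
    induction y using FreeAlgebra.induction with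
    | grade0 r =>
        intro v hv
        rw [AlgHom.commutes]
        exact N₀.smul_mem r hv
    | grade1 x =>
        intro v hv
        rcases eq_or_ne x 0 with rfl | hx
        · rw [rho_i0]; exact hA v hv
        · rw [Fin.eq_one_of_ne_zero x hx, rho_i1]; exact hB v hv
    | mul y z hy hz =>
        intro v hv
        rw [map_mul, Module.End.mul_apply]
        exact hy _ (hz v hv)
    | add y z hy hz =>
        intro v hv
        rw [map_add, LinearMap.add_apply]
        exact N₀.add_mem (hy v hv) (hz v hv)
  -- build a QW-submodule out of an A,B-stable K-submodule
  let mk : (N₀ : Submodule K (Mo K)) → (∀ v ∈ N₀, Amap K q v ∈ N₀) →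
      (∀ v ∈ N₀, Bmap K q v ∈ N₀) → Submodule (QuantizedWeyl K q) (Mo K) :=
    fun N₀ hA hB =>
    { carrier := N₀
      add_mem' := fun h1 h2 => N₀.add_mem h1 h2
      zero_mem' := N₀.zero_mem
      smul_mem' := by
        intro x v hv
        obtain ⟨y, rfl⟩ := RingQuot.mkAlgHom_surjective K (QuantizedWeylRel K q) x
        rw [hsmul, Phi, RingQuot.liftAlgHom_mkAlgHom_apply]
        exact key y N₀ hA hB v hv }
  -- turn a QW-submodule into a K-submodule (same carrier)
  have toK : ∀ N : Submodule (QuantizedWeyl K q) (Mo K),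
      ∃ N₀ : Submodule K (Mo K), ∀ v : Mo K, v ∈ N₀ ↔ v ∈ N := by
    intro N
    refine ⟨{ carrier := N
              add_mem' := fun h1 h2 => N.add_mem h1 h2
              zero_mem' := N.zero_mem
              smul_mem' := by
                intro x v hv
                rw [show x • v = (algebraMap K (QuantizedWeyl K q) x) • v from (halg x v).symm]
                exact N.smul_mem _ hv }, fun v => Iff.rfl⟩
  -- the socle at K-level
  let SK : Submodule K (Mo K) := LinearMap.ker (LinearMap.snd K (ℕ →₀ K) (ℕ →₀ K))
  have hSKmem : ∀ v : Mo K, v ∈ SK ↔ v.2 = 0 := fun v => LinearMap.mem_ker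
  have hSA : ∀ v ∈ SK, Amap K q v ∈ SK := by
    intro v hv
    rw [hSKmem] at hv ⊢
    rw [Amap_apply]
    show dg K (fun j => mu K q * q ^ j) v.2 + U K v.2 = 0
    rw [hv, map_zero, map_zero, add_zero]
  have hSB : ∀ v ∈ SK, Bmap K q v ∈ SK := by
    intro v hv
    rw [hSKmem] at hv ⊢
    rw [Bmap_apply]
    show dg K (fun j => q⁻¹ ^ j) v.2 = 0
    rw [hv, map_zero]
  let S : Submodule (QuantizedWeyl K q) (Mo K) := mk SK hSA hSB
  have hSmem : ∀ v : Mo K, v ∈ S ↔ v.2 = 0 := fun v => hSKmem v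
  have hwv0ne : wv K 0 ≠ (0 : Mo K) := by
    intro h
    have := congrArg Prod.fst h
    rw [wv] at this
    exact one_ne_zero (Finsupp.single_eq_zero.1 this)
  refine ⟨{ M := Mo K
            isAddCommGroup := inferInstance
            isModule := instM
            fg := ?_
            monolith := S
            monolith_simple := ?_
            monolith_essential := ?_
            not_artinian := ?_ }⟩
  · -- finitely generated
    refine ⟨⟨{fv K 0}, ?_⟩⟩
    rw [eq_top_iff]
    intro v _
    obtain ⟨N₀, hN₀⟩ := toK (Submodule.span (QuantizedWeyl K q) {fv K 0})
    have hA' : ∀ u ∈ N₀, Amap K q u ∈ N₀ := by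
      intro u hu
      rw [hN₀, ← ha]
      exact Submodule.smul_mem _ _ ((hN₀ u).1 hu)
    have hB' : ∀ u ∈ N₀, Bmap K q u ∈ N₀ := by
      intro u hu
      rw [hN₀, ← hb]
      exact Submodule.smul_mem _ _ ((hN₀ u).1 hu)
    have hf0 : fv K 0 ∈ N₀ := by
      rw [hN₀]
      exact Submodule.subset_span rfl
    have := gen_all N₀ hA' hB' hf0 v
    rw [hN₀] at this
    simpa using this
  · -- the monolith is simple
    rw [isSimpleModule_iff_isAtom]
    constructor
    · rw [Submodule.ne_bot_iff]
      exact ⟨wv K 0, (hSmem _).2 rfl, hwv0ne⟩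
    · intro N hNlt
      by_contra hne
      obtain ⟨v, hvN, hvne⟩ := (Submodule.ne_bot_iff N).1 hne
      obtain ⟨N₀, hN₀⟩ := toK N
      have hA' : ∀ u ∈ N₀, Amap K q u ∈ N₀ := by
        intro u hu
        rw [hN₀, ← ha]
        exact Submodule.smul_mem _ _ ((hN₀ u).1 hu)
      have hB' : ∀ u ∈ N₀, Bmap K q u ∈ N₀ := by
        intro u hu
        rw [hN₀, ← hb]
        exact Submodule.smul_mem _ _ ((hN₀ u).1 hu)
      have hv2 : v.2 = 0 := (hSmem v).1 (hNlt.le hvN)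
      have hv1 : v.1 ≠ 0 := by
        intro h
        exact hvne (Prod.ext_iff.2 ⟨h, hv2⟩)
      have hvmem : ((v.1, 0) : Mo K) ∈ N₀ := by
        have : ((v.1, 0) : Mo K) = v := Prod.ext_iff.2 ⟨rfl, hv2.symm⟩
        rw [this, hN₀]
        exact hvN
      have hw0 : wv K 0 ∈ N₀ := reach_w0 hq1 hq N₀ hA' v.1 hv1 hvmem
      have hall := span_w N₀ hB' hw0
      have hSle : S ≤ N := by
        intro u hu
        have hu2 : u.2 = 0 := (hSmem u).1 hu
        have : u = ((u.1, 0) : Mo K) := Prod.ext_iff.2 ⟨rfl, hu2⟩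
        rw [this, ← hN₀]
        exact hall u.1
      exact lt_irrefl _ (hNlt.trans_le hSle)
  · -- the monolith is essential
    intro N hN
    obtain ⟨v, hvN, hvne⟩ := (Submodule.ne_bot_iff N).1 hN
    obtain ⟨N₀, hN₀⟩ := toK N
    have hB' : ∀ u ∈ N₀, Bmap K q u ∈ N₀ := by
      intro u hu
      rw [hN₀, ← hb]
      exact Submodule.smul_mem _ _ ((hN₀ u).1 hu)
    obtain ⟨u, huN₀, hune, hu2⟩ :=
      hit_socle hq0 hq1 hq N₀ hB' v.2.support.card v ((hN₀ v).2 hvN) hvne le_rfl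
    rw [Submodule.ne_bot_iff]
    exact ⟨u, Submodule.mem_inf.2 ⟨(hN₀ u).1 huN₀, (hSmem u).2 hu2⟩, hune⟩
  · -- not Artinian
    intro hart
    have hwf : WellFounded
        ((· < ·) : Submodule (QuantizedWeyl K q) (Mo K) →
          Submodule (QuantizedWeyl K q) (Mo K) → Prop) := (isArtinian_iff _ _).1 hart
    let Ch : ℕ → Submodule (QuantizedWeyl K q) (Mo K) :=
      fun k => mk (chainN K k) chainN_A chainN_B
    have hChmem : ∀ k (v : Mo K), v ∈ Ch k ↔ v ∈ chainN K k := fun _ _ => Iff.rfl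
    have hlt : ∀ k, Ch (k+1) < Ch k := by
      intro k
      rw [lt_iff_le_and_ne]
      constructor
      · intro v hv
        exact (hChmem k v).2 (chainN_antitone ((hChmem (k+1) v).1 hv))
      · intro hEq
        apply fv_not_mem_chainN (K := K) k
        have h1 : fv K k ∈ Ch k := (hChmem k _).2 (fv_mem_chainN k)
        rw [← hEq] at h1
        exact (hChmem (k+1) _).1 h1
    obtain ⟨m, ⟨k, rfl⟩, hmin⟩ := hwf.has_min (Set.range Ch) ⟨Ch 0, 0, rfl⟩
    exact hmin (Ch (k+1)) ⟨k+1, rfl⟩ (hlt k)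

end
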